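/- Let F ⊆ D be finite designs, G = {g_1,…,g_q} a Gröbner basis of I(F) w.r.t. a term ordering ≻, and let x^{α_1},…,x^{α_{N−n}} be the monomials of Est_D ∖ Est_F. For each j choose g_{i(j)} ∈ G and a monomial m_j with x^{α_j} = m_j·LT(g_{i(j)}). Then the residue classes of m_1 g_{i(1)},…,m_{N−n} g_{i(N−n)} form a k-vector-space basis of R/I(D∖F). -/

import Mathlib

/-- The vanishing ideal (design ideal) of a set of points in `k^m`. -/
def vanishingIdeal {k : Type*} [Field k] {m : ℕ} (S : Set (Fin m → k)) :
    Ideal (MvPolynomial (Fin m) k) where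
  carrier := {f | ∀ ζ ∈ S, MvPolynomial.eval ζ f = 0}
  add_mem' := fun hf hg ζ hζ => by simp [hf ζ hζ, hg ζ hζ]
  zero_mem' := fun ζ _ => by simp
  smul_mem' := fun c f hf ζ hζ => by simp [smul_eq_mul, hf ζ hζ]


open MvPolynomial

/-- The leading exponent of a polynomial with respect to a monomial order:
the maximum of its support. (For `f = 0` it is `0`.) -/
noncomputable def leadExp {σ : Type*} (mo : MonomialOrder σ) {k : Type*} [Field k]
    (f : MvPolynomial σ k) : σ →₀ ℕ :=
  mo.toSyn.symm (f.support.sup mo.toSyn)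

/-- The leading term ideal `LT(I)`: the ideal generated by the leading monomials of
the nonzero elements of `I`. -/
noncomputable def ltIdeal {σ : Type*} (mo : MonomialOrder σ) {k : Type*} [Field k]
    (I : Ideal (MvPolynomial σ k)) : Ideal (MvPolynomial σ k) :=
  Ideal.span {p | ∃ f ∈ I, f ≠ 0 ∧ p = monomial (leadExp mo f) (1 : k)}

section Aux

variable {σ : Type*} (mo : MonomialOrder σ) {k : Type*} [Field k]

lemma toSyn_leadExp (f : MvPolynomial σ k) :
    mo.toSyn (leadExp mo f) = f.support.sup mo.toSyn := by
  simp [leadExp]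

lemma le_leadExp {f : MvPolynomial σ k} {β : σ →₀ ℕ} (h : β ∈ f.support) :
    mo.toSyn β ≤ mo.toSyn (leadExp mo f) := by
  rw [toSyn_leadExp]; exact Finset.le_sup h

lemma leadExp_mem_support {f : MvPolynomial σ k} (h : f ≠ 0) :
    leadExp mo f ∈ f.support := by
  obtain ⟨β, hβ, hsup⟩ :=
    Finset.exists_mem_eq_sup f.support (support_nonempty.2 h) mo.toSyn
  have : leadExp mo f = β := by
    rw [leadExp, hsup, AddEquiv.symm_apply_apply]
  rwa [this]

lemma coeff_leadExp_ne_zero {f : MvPolynomial σ k} (h : f ≠ 0) :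
    coeff (leadExp mo f) f ≠ 0 :=
  mem_support_iff.1 (leadExp_mem_support mo h)

lemma supp_monomial_mul_le {g : MvPolynomial σ k} {m β : σ →₀ ℕ}
    (hβ : β ∈ (monomial m (1 : k) * g).support) :
    mo.toSyn β ≤ mo.toSyn (m + leadExp mo g) := by
  have hc : coeff β (monomial m (1 : k) * g) ≠ 0 := mem_support_iff.1 hβ
  rw [coeff_monomial_mul'] at hc
  split_ifs at hc with hle
  · rw [one_mul] at hc
    have h1 : β - m ∈ g.support := mem_support_iff.2 hc
    have h2 : β = m + (β - m) := by
      rw [add_tsub_cancel_of_le hle]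
    rw [h2, map_add, map_add]
    exact add_le_add le_rfl (le_leadExp mo h1)
  · exact absurd rfl hc

lemma coeff_monomial_mul_top (g : MvPolynomial σ k) (m : σ →₀ ℕ) :
    coeff (m + leadExp mo g) (monomial m (1 : k) * g) = coeff (leadExp mo g) g := by
  rw [coeff_monomial_mul, one_mul]

end Aux

section Eval

variable {k : Type*} [Field k] {v : ℕ}

lemma mem_vanishingIdeal_iff' {S : Set (Fin v → k)} {f : MvPolynomial (Fin v) k} :
    f ∈ _root_.vanishingIdeal S ↔ ∀ ζ ∈ S, eval ζ f = 0 := Iff.rfl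

/-- evaluation on a finite set as an algebra hom -/
noncomputable def evAlg (S : Finset (Fin v → k)) :
    MvPolynomial (Fin v) k →ₐ[k] (↥S → k) :=
  MvPolynomial.aeval (fun i (ζ : S) => (ζ : Fin v → k) i)

lemma evAlg_apply (S : Finset (Fin v → k)) (f : MvPolynomial (Fin v) k) (ζ : S) :
    evAlg S f ζ = eval (ζ : Fin v → k) f := by
  have h := comp_aeval_apply (R := k)
    (f := fun i (ζ : S) => (ζ : Fin v → k) i)
    (Pi.evalAlgHom k (fun _ : S => k) ζ) f
  calc evAlg S f ζ = MvPolynomial.aeval (fun i => (ζ : Fin v → k) i) f := h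
    _ = eval (ζ : Fin v → k) f := by rw [aeval_def, Algebra.algebraMap_self]; rfl

lemma exists_indicator (S : Finset (Fin v → k)) {ζ0 : Fin v → k} :
    ∃ p : MvPolynomial (Fin v) k, eval ζ0 p = 1 ∧ ∀ ζ ∈ S, ζ ≠ ζ0 → eval ζ p = 0 := by
  have hfac : ∀ ζ : Fin v → k, ∃ q : MvPolynomial (Fin v) k,
      eval ζ0 q = 1 ∧ (ζ ≠ ζ0 → eval ζ q = 0) := by
    intro ζ
    classical
    by_cases hζ : ζ = ζ0
    · exact ⟨1, by simp, fun h => absurd hζ h⟩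
    · obtain ⟨i, hi⟩ := Function.ne_iff.1 hζ
      refine ⟨C (ζ0 i - ζ i)⁻¹ * (X i - C (ζ i)), ?_, fun _ => ?_⟩
      · have : ζ0 i - ζ i ≠ 0 := sub_ne_zero.2 (Ne.symm hi)
        simp [inv_mul_cancel₀ this]
      · simp
  classical
  choose q hq1 hq0 using hfac
  refine ⟨∏ ζ ∈ S.filter (· ≠ ζ0), q ζ, ?_, ?_⟩
  · rw [map_prod]
    exact Finset.prod_eq_one fun ζ _ => hq1 ζ
  · intro ζ hζS hne
    rw [map_prod]
    exact Finset.prod_eq_zero (Finset.mem_filter.2 ⟨hζS, hne⟩) (hq0 ζ hne)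

lemma evAlg_surjective (S : Finset (Fin v → k)) : Function.Surjective (evAlg S) := by
  classical
  intro x
  have hsingle : ∀ ζ0 : S, (fun ζ : S => if ζ0 = ζ then (1:k) else 0) ∈ (evAlg S).range := by
    intro ζ0
    obtain ⟨p, hp1, hp0⟩ := exists_indicator S (ζ0 := (ζ0 : Fin v → k))
    refine ⟨p, funext fun ζ => ?_⟩
    show evAlg S p ζ = _
    rw [evAlg_apply]
    by_cases h : ζ0 = ζ
    · subst h; simp [hp1]
    · have : (ζ : Fin v → k) ≠ (ζ0 : Fin v → k) := fun he => h (Subtype.ext he.symm)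
      simp [h, hp0 ζ ζ.2 this]
  have : x ∈ (evAlg S).range := by
    classical
    rw [pi_eq_sum_univ x]
    exact Subalgebra.sum_mem _ fun ζ _ =>
      Subalgebra.smul_mem _ (by simpa [eq_comm] using hsingle ζ) _
  exact this

lemma ker_evAlg (S : Finset (Fin v → k)) :
    RingHom.ker (evAlg S) = _root_.vanishingIdeal (S : Set (Fin v → k)) := by
  ext f
  rw [RingHom.mem_ker, mem_vanishingIdeal_iff']
  constructor
  · intro h ζ hζ
    have := congrFun h ⟨ζ, hζ⟩
    rwa [evAlg_apply] at this
  · intro h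
    funext ζ
    rw [evAlg_apply]
    exact h ζ ζ.2

lemma finrank_quotient_vanishingIdeal (S : Finset (Fin v → k)) :
    Module.finrank k (MvPolynomial (Fin v) k ⧸ _root_.vanishingIdeal (S : Set (Fin v → k)))
      = S.card := by
  have e := Ideal.quotientKerAlgEquivOfSurjective (evAlg_surjective S)
  rw [← ker_evAlg]
  rw [e.toLinearEquiv.finrank_eq, Module.finrank_fintype_fun_eq_card, Fintype.card_coe]

end Eval

/-- The residue classes of `m_j · g_{i(j)}`, for the monomials
`x^{α_j} = m_j · LT(g_{i(j)})` of `Est_D ∖ Est_F`, form a `k`-vector-space basis of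
`R/I(D∖F)`. -/
theorem stmt_10 {k : Type*} [Field k] {v : ℕ} [DecidableEq (Fin v → k)]
    (mo : MonomialOrder (Fin v))
    (F D : Finset (Fin v → k)) (hFD : F ⊆ D)
    (G : Finset (MvPolynomial (Fin v) k))
    (hG0 : ∀ g ∈ G, g ≠ 0)
    (hGF : ∀ g ∈ G, g ∈ _root_.vanishingIdeal (F : Set (Fin v → k)))
    (hGB : ltIdeal mo (_root_.vanishingIdeal (F : Set (Fin v → k))) =
      Ideal.span {p | ∃ g ∈ G, p = monomial (leadExp mo g) (1 : k)})
    (α : Fin (D.card - F.card) → (Fin v →₀ ℕ))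
    (hαinj : Function.Injective α)
    (hαrange : ∀ β : Fin v →₀ ℕ, β ∈ Set.range α ↔
      (monomial β (1 : k) ∉ ltIdeal mo (_root_.vanishingIdeal (D : Set (Fin v → k))) ∧
       monomial β (1 : k) ∈ ltIdeal mo (_root_.vanishingIdeal (F : Set (Fin v → k)))))
    (gi : Fin (D.card - F.card) → MvPolynomial (Fin v) k)
    (hgi : ∀ j, gi j ∈ G)
    (mexp : Fin (D.card - F.card) → (Fin v →₀ ℕ))
    (hm : ∀ j, α j = mexp j + leadExp mo (gi j)) :
    ∃ b : Module.Basis (Fin (D.card - F.card)) k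
        (MvPolynomial (Fin v) k ⧸
          _root_.vanishingIdeal ((D \ F : Finset (Fin v → k)) : Set (Fin v → k))),
      ∀ j, b j =
        Ideal.Quotient.mk
          (_root_.vanishingIdeal ((D \ F : Finset (Fin v → k)) : Set (Fin v → k)))
          (monomial (mexp j) (1 : k) * gi j) := by
  classical
  set I : Ideal (MvPolynomial (Fin v) k) :=
    _root_.vanishingIdeal ((D \ F : Finset (Fin v → k)) : Set (Fin v → k)) with hIdef
  set p : Fin (D.card - F.card) → MvPolynomial (Fin v) k :=
    fun j => monomial (mexp j) (1 : k) * gi j with hpdef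
  set vq : Fin (D.card - F.card) → (MvPolynomial (Fin v) k ⧸ I) :=
    fun j => Ideal.Quotient.mk I (p j) with hvqdef
  -- each gi j is nonzero
  have hginz : ∀ j, gi j ≠ 0 := fun j => hG0 _ (hgi j)
  -- cardinality of D \ F
  have hcardS : (D \ F).card = D.card - F.card := Finset.card_sdiff_of_subset hFD
  -- finrank of the quotient
  have hfr : Module.finrank k (MvPolynomial (Fin v) k ⧸ I) = D.card - F.card := by
    rw [hIdef, finrank_quotient_vanishingIdeal, hcardS]
  -- linear independence
  have hli : LinearIndependent k vq := by
    rw [Fintype.linearIndependent_iff]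
    intro c hc
    by_contra hcne
    push_neg at hcne
    obtain ⟨j1, hj1⟩ := hcne
    set h : MvPolynomial (Fin v) k := ∑ j, c j • p j with hhdef
    -- h maps to 0 in the quotient
    have hmk : Ideal.Quotient.mk I h = 0 := by
      rw [hhdef, map_sum]
      rw [← hc]
      refine Finset.sum_congr rfl fun j _ => ?_
      rw [← Ideal.Quotient.mkₐ_eq_mk k I, map_smul, Ideal.Quotient.mkₐ_eq_mk]
    have hhI : h ∈ I := (Ideal.Quotient.eq_zero_iff_mem).1 hmk
    -- h vanishes on F
    have hhF : h ∈ _root_.vanishingIdeal (F : Set (Fin v → k)) := by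
      refine Submodule.sum_mem _ fun j _ => ?_
      rw [smul_eq_C_mul]
      exact Ideal.mul_mem_left _ _ (Ideal.mul_mem_left _ _ (hGF _ (hgi j)))
    -- hence h vanishes on D
    have hhD : h ∈ _root_.vanishingIdeal (D : Set (Fin v → k)) := by
      intro ζ hζ
      rw [Finset.mem_coe] at hζ
      by_cases hζF : ζ ∈ F
      · exact hhF ζ hζF
      · exact hhI ζ (by rw [Finset.coe_sdiff]; exact ⟨hζ, hζF⟩)
    -- choose the maximal index
    set s : Finset (Fin (D.card - F.card)) := Finset.univ.filter (fun j => c j ≠ 0) with hsdef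
    have hs : s.Nonempty := ⟨j1, by simp [hsdef, hj1]⟩
    obtain ⟨j0, hj0s, hj0max⟩ := s.exists_max_image (fun j => mo.toSyn (α j)) hs
    have hcj0 : c j0 ≠ 0 := (Finset.mem_filter.1 hj0s).2
    -- the coefficient of h at α j0
    have hcoeff : coeff (α j0) h = c j0 * coeff (leadExp mo (gi j0)) (gi j0) := by
      rw [hhdef, coeff_sum]
      rw [Finset.sum_eq_single j0]
      · rw [coeff_smul, smul_eq_mul, hpdef]
        rw [show α j0 = mexp j0 + leadExp mo (gi j0) from hm j0]
        rw [coeff_monomial_mul_top]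
      · intro j hju hj
        rw [coeff_smul, smul_eq_mul]
        by_cases hcj : c j = 0
        · rw [hcj, zero_mul]
        · have hj_s : j ∈ s := by simp [hsdef, hcj]
          have : coeff (α j0) (p j) = 0 := by
            by_contra hne
            have hmem : α j0 ∈ (p j).support := mem_support_iff.2 hne
            have h1 : mo.toSyn (α j0) ≤ mo.toSyn (α j) := by
              have := supp_monomial_mul_le mo hmem
              rwa [← hm j] at this
            have h2 : mo.toSyn (α j) ≤ mo.toSyn (α j0) := hj0max j hj_s
            have : α j = α j0 := mo.toSyn.injective (le_antisymm h2 h1)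
            exact hj (hαinj this)
          rw [this, mul_zero]
      · intro hj0
        exact absurd (Finset.mem_univ j0) hj0
    have hcoeffne : coeff (α j0) h ≠ 0 := by
      rw [hcoeff]
      exact mul_ne_zero hcj0 (coeff_leadExp_ne_zero mo (hginz j0))
    have hh0 : h ≠ 0 := fun he => hcoeffne (by rw [he, coeff_zero])
    -- leading exponent of h is α j0
    have hlead : leadExp mo h = α j0 := by
      apply mo.toSyn.injective
      apply le_antisymm
      · have hsub : leadExp mo h ∈ h.support := leadExp_mem_support mo hh0
        have : coeff (leadExp mo h) h ≠ 0 := mem_support_iff.1 hsub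
        rw [hhdef, coeff_sum] at this
        obtain ⟨j, -, hjne⟩ := Finset.exists_ne_zero_of_sum_ne_zero this
        rw [coeff_smul, smul_eq_mul] at hjne
        have hcj : c j ≠ 0 := fun he => hjne (by rw [he, zero_mul])
        have hpj : coeff (leadExp mo h) (p j) ≠ 0 := fun he => hjne (by rw [he, mul_zero])
        have h1 : mo.toSyn (leadExp mo h) ≤ mo.toSyn (α j) := by
          have := supp_monomial_mul_le mo (mem_support_iff.2 hpj)
          rwa [← hm j] at this
        exact h1.trans (hj0max j (by simp [hsdef, hcj]))
      · exact le_leadExp mo (mem_support_iff.2 hcoeffne)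
    -- contradiction with hαrange
    have hmemlt : monomial (α j0) (1 : k) ∈
        ltIdeal mo (_root_.vanishingIdeal (D : Set (Fin v → k))) := by
      apply Ideal.subset_span
      exact ⟨h, hhD, hh0, by rw [hlead]⟩
    exact ((hαrange (α j0)).1 ⟨j0, rfl⟩).1 hmemlt
  -- build the basis
  rcases isEmpty_or_nonempty (Fin (D.card - F.card)) with hemp | hne
  · have hc0 : D.card - F.card = 0 := by
      by_contra h0
      exact hemp.elim ⟨0, Nat.pos_of_ne_zero h0⟩
    have hSempty : (D \ F) = (∅ : Finset (Fin v → k)) :=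
      Finset.card_eq_zero.1 (hcardS.trans hc0)
    have hItop : I = ⊤ := by
      rw [Ideal.eq_top_iff_one]
      intro ζ hζ
      rw [hIdef] at *
      simp [hSempty] at hζ
    have : Subsingleton (MvPolynomial (Fin v) k ⧸ I) :=
      Ideal.Quotient.subsingleton_iff.2 hItop
    exact ⟨Module.Basis.empty _, fun j => isEmptyElim j⟩
  · have hcard : Fintype.card (Fin (D.card - F.card)) =
        Module.finrank k (MvPolynomial (Fin v) k ⧸ I) := by
      rw [Fintype.card_fin, hfr]
    refine ⟨basisOfLinearIndependentOfCardEqFinrank hli hcard, fun j => ?_⟩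
    rw [coe_basisOfLinearIndependentOfCardEqFinrank]
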